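/- Let n ≥ 0 be an integer. Set Σⁿ₀ = { y ∈ ℝ^{Fin(n+1)} : 0 ≤ y(i) ≤ 1 for all i, and ∏ᵢ y(i) = 0 } with the subspace topology. Then there is a homeomorphism f from Σⁿ₀ × [0,1) onto the space { (x,ρ) ∈ ℝ^{Fin(n+1)} × ℝ : 0 ≤ x(i) ≤ 1 for all i, ∏ᵢ x(i) = ρ, and 0 ≤ ρ < 1 } (subspace topology) such that for every (y,ρ), the second component of f(y,ρ) is ρ and there exists s ∈ [0,1] with (f(y,ρ))₁(i) = (1−s)·y(i) + s for all i; i.e. f(y,ρ) is the unique intersection point of Σⁿ_ρ with the segment joining y to (1,…,1), paired with ρ. -/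

import Mathlib

/-- The simplex `Σⁿ₀ = {y ∈ [0,1]^{n+1} : ∏ yᵢ = 0}`. -/
def Sigma0 (n : ℕ) : Set (Fin (n + 1) → ℝ) :=
  {y | (∀ i, 0 ≤ y i ∧ y i ≤ 1) ∧ ∏ i, y i = 0}

/-- The total space `{(x, ρ) : x ∈ [0,1]^{n+1}, ∏ xᵢ = ρ, 0 ≤ ρ < 1}`. -/
def SigmaTot (n : ℕ) : Set ((Fin (n + 1) → ℝ) × ℝ) :=
  {p | (∀ i, 0 ≤ p.1 i ∧ p.1 i ≤ 1) ∧ ∏ i, p.1 i = p.2 ∧ 0 ≤ p.2 ∧ p.2 < 1}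

noncomputable section Stmt11Aux

namespace Stmt11

open Finset

variable {n : ℕ}

def g (n : ℕ) (y : Fin (n + 1) → ℝ) (s : ℝ) : ℝ := ∏ i, ((1 - s) * y i + s)

lemma g_strictMonoOn {y : Fin (n + 1) → ℝ} (hy : ∀ i, 0 ≤ y i ∧ y i ≤ 1)
    (hy0 : ∏ i, y i = 0) : StrictMonoOn (g n y) (Set.Icc 0 1) := by
  rintro s ⟨hs0, hs1⟩ t ⟨ht0, ht1⟩ hst
  obtain ⟨j, -, hj⟩ := Finset.prod_eq_zero_iff.mp hy0
  have hsj : (1 - s) * y j + s = s := by rw [hj]; ring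
  have htj : (1 - t) * y j + t = t := by rw [hj]; ring
  have hA : ∀ i, 0 ≤ (1 - s) * y i + s := fun i => by nlinarith [(hy i).1, (hy i).2]
  have ht0' : 0 < t := lt_of_le_of_lt hs0 hst
  have hBpos : 0 < ∏ i ∈ univ.erase j, ((1 - t) * y i + t) := by
    apply Finset.prod_pos
    intro i _
    nlinarith [(hy i).1, (hy i).2]
  have hle : ∏ i ∈ univ.erase j, ((1 - s) * y i + s) ≤
      ∏ i ∈ univ.erase j, ((1 - t) * y i + t) := by
    apply Finset.prod_le_prod
    · intro i _; exact hA i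
    · intro i _; nlinarith [(hy i).1, (hy i).2]
  have h1 : g n y s = s * ∏ i ∈ univ.erase j, ((1 - s) * y i + s) := by
    rw [g, ← Finset.mul_prod_erase univ _ (mem_univ j), hsj]
  have h2 : g n y t = t * ∏ i ∈ univ.erase j, ((1 - t) * y i + t) := by
    rw [g, ← Finset.mul_prod_erase univ _ (mem_univ j), htj]
  rw [h1, h2]
  calc s * ∏ i ∈ univ.erase j, ((1 - s) * y i + s)
      ≤ s * ∏ i ∈ univ.erase j, ((1 - t) * y i + t) :=
        mul_le_mul_of_nonneg_left hle hs0
    _ < t * ∏ i ∈ univ.erase j, ((1 - t) * y i + t) :=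
        mul_lt_mul_of_pos_right hst hBpos

lemma g_cont (y : Fin (n + 1) → ℝ) : Continuous (g n y) := by
  apply continuous_finset_prod
  intro i _
  fun_prop

lemma exists_s {y : Fin (n + 1) → ℝ} (hy : ∀ i, 0 ≤ y i ∧ y i ≤ 1)
    (hy0 : ∏ i, y i = 0) {ρ : ℝ} (hρ : ρ ∈ Set.Ico (0 : ℝ) 1) :
    ∃ s ∈ Set.Ico (0 : ℝ) 1, g n y s = ρ := by
  have h0 : g n y 0 = 0 := by simp [g, hy0]
  have h1 : g n y 1 = 1 := by simp [g]
  have : ρ ∈ Set.Icc (g n y 0) (g n y 1) := by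
    rw [h0, h1]; exact ⟨hρ.1, le_of_lt hρ.2⟩
  obtain ⟨s, hs, hgs⟩ := intermediate_value_Icc zero_le_one (g_cont y).continuousOn this
  refine ⟨s, ⟨hs.1, lt_of_le_of_ne hs.2 ?_⟩, hgs⟩
  rintro rfl
  rw [h1] at hgs
  exact absurd hgs.symm (ne_of_lt hρ.2)

def sF (n : ℕ) (p : Sigma0 n × Set.Ico (0 : ℝ) 1) : ℝ :=
  (exists_s p.1.2.1 p.1.2.2 p.2.2).choose

lemma sF_mem (p : Sigma0 n × Set.Ico (0 : ℝ) 1) : sF n p ∈ Set.Ico (0 : ℝ) 1 :=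
  (exists_s p.1.2.1 p.1.2.2 p.2.2).choose_spec.1

lemma g_sF (p : Sigma0 n × Set.Ico (0 : ℝ) 1) : g n p.1 (sF n p) = p.2 :=
  (exists_s p.1.2.1 p.1.2.2 p.2.2).choose_spec.2

lemma s_unique {y : Fin (n + 1) → ℝ} (hy : ∀ i, 0 ≤ y i ∧ y i ≤ 1)
    (hy0 : ∏ i, y i = 0) {s t : ℝ} (hs : s ∈ Set.Icc (0 : ℝ) 1)
    (ht : t ∈ Set.Icc (0 : ℝ) 1) (h : g n y s = g n y t) : s = t :=
  (g_strictMonoOn hy hy0).injOn hs ht h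

lemma g_cont_param (c : ℝ) :
    Continuous (fun p : Sigma0 n × Set.Ico (0 : ℝ) 1 => g n (p.1 : Fin (n + 1) → ℝ) c) := by
  apply continuous_finset_prod
  intro i _
  exact Continuous.add (Continuous.mul continuous_const
    ((continuous_apply i).comp (continuous_subtype_val.comp continuous_fst))) continuous_const

lemma sF_cont : Continuous (sF n) := by
  rw [continuous_iff_continuousAt]
  intro p₀
  unfold ContinuousAt
  rw [Metric.tendsto_nhds]
  intro ε hε
  have hs₀mem := sF_mem p₀
  have hρcont : Continuous (fun p : Sigma0 n × Set.Ico (0 : ℝ) 1 => (p.2 : ℝ)) :=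
    continuous_subtype_val.comp continuous_snd
  have hL : ∀ᶠ p in nhds p₀, sF n p₀ - ε / 2 ≤ sF n p := by
    by_cases ha : sF n p₀ - ε / 2 ≤ 0
    · exact Filter.Eventually.of_forall fun p => le_trans ha (sF_mem p).1
    · push_neg at ha
      set a := sF n p₀ - ε / 2 with hadef
      have haIcc : a ∈ Set.Icc (0 : ℝ) 1 := ⟨le_of_lt ha, by
        rw [hadef]; have := hs₀mem.2; linarith⟩
      have hlt : g n (p₀.1 : Fin (n + 1) → ℝ) a < (p₀.2 : ℝ) := by
        rw [← g_sF p₀]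
        exact g_strictMonoOn p₀.1.2.1 p₀.1.2.2 haIcc ⟨hs₀mem.1, le_of_lt hs₀mem.2⟩
          (by rw [hadef]; linarith)
      have hopen : IsOpen {p : Sigma0 n × Set.Ico (0 : ℝ) 1 |
          g n (p.1 : Fin (n + 1) → ℝ) a < (p.2 : ℝ)} :=
        isOpen_lt (g_cont_param a) hρcont
      filter_upwards [hopen.mem_nhds hlt] with p hp
      by_contra hcon
      push_neg at hcon
      have hsp := sF_mem p
      have : g n (p.1 : Fin (n + 1) → ℝ) (sF n p) < g n (p.1 : Fin (n + 1) → ℝ) a :=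
        g_strictMonoOn p.1.2.1 p.1.2.2 ⟨hsp.1, le_of_lt hsp.2⟩ haIcc hcon
      rw [g_sF p] at this
      exact absurd (lt_trans this hp) (lt_irrefl _)
  have hU : ∀ᶠ p in nhds p₀, sF n p ≤ sF n p₀ + ε / 2 := by
    by_cases hb : 1 ≤ sF n p₀ + ε / 2
    · exact Filter.Eventually.of_forall fun p => le_trans (le_of_lt (sF_mem p).2) hb
    · push_neg at hb
      set b := sF n p₀ + ε / 2 with hbdef
      have hbIcc : b ∈ Set.Icc (0 : ℝ) 1 := ⟨by rw [hbdef]; linarith [hs₀mem.1], le_of_lt hb⟩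
      have hlt : (p₀.2 : ℝ) < g n (p₀.1 : Fin (n + 1) → ℝ) b := by
        rw [← g_sF p₀]
        exact g_strictMonoOn p₀.1.2.1 p₀.1.2.2 ⟨hs₀mem.1, le_of_lt hs₀mem.2⟩ hbIcc
          (by rw [hbdef]; linarith)
      have hopen : IsOpen {p : Sigma0 n × Set.Ico (0 : ℝ) 1 |
          (p.2 : ℝ) < g n (p.1 : Fin (n + 1) → ℝ) b} :=
        isOpen_lt hρcont (g_cont_param b)
      filter_upwards [hopen.mem_nhds hlt] with p hp
      by_contra hcon
      push_neg at hcon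
      have hsp := sF_mem p
      have : g n (p.1 : Fin (n + 1) → ℝ) b < g n (p.1 : Fin (n + 1) → ℝ) (sF n p) :=
        g_strictMonoOn p.1.2.1 p.1.2.2 hbIcc ⟨hsp.1, le_of_lt hsp.2⟩ hcon
      rw [g_sF p] at this
      exact absurd (lt_trans this hp) (lt_irrefl _)
  filter_upwards [hL, hU] with p h1 h2
  rw [Real.dist_eq, abs_lt]
  constructor <;> linarith

/-- forward map -/
def phi (n : ℕ) (p : Sigma0 n × Set.Ico (0 : ℝ) 1) : SigmaTot n :=
  ⟨(fun i => (1 - sF n p) * (p.1 : Fin (n + 1) → ℝ) i + sF n p, (p.2 : ℝ)), by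
    have hs := sF_mem p
    refine ⟨fun i => ⟨?_, ?_⟩, g_sF p, p.2.2.1, p.2.2.2⟩
    · show (0:ℝ) ≤ (1 - sF n p) * (p.1 : Fin (n + 1) → ℝ) i + sF n p
      nlinarith [(p.1.2.1 i).1, (p.1.2.1 i).2, hs.1, hs.2]
    · show (1 - sF n p) * (p.1 : Fin (n + 1) → ℝ) i + sF n p ≤ 1
      nlinarith [(p.1.2.1 i).1, (p.1.2.1 i).2, hs.1, hs.2]⟩

def mF (n : ℕ) (q : SigmaTot n) : ℝ :=
  Finset.univ.inf' Finset.univ_nonempty (fun i => (q : (Fin (n + 1) → ℝ) × ℝ).1 i)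

lemma mF_le (q : SigmaTot n) (i : Fin (n + 1)) : mF n q ≤ (q : (Fin (n + 1) → ℝ) × ℝ).1 i :=
  Finset.inf'_le _ (mem_univ i)

lemma mF_nonneg (q : SigmaTot n) : 0 ≤ mF n q :=
  Finset.le_inf' _ _ fun i _ => (q.2.1 i).1

lemma mF_lt_one (q : SigmaTot n) : mF n q < 1 := by
  by_contra h
  push_neg at h
  have hall : ∀ i, (q : (Fin (n + 1) → ℝ) × ℝ).1 i = 1 := fun i =>
    le_antisymm (q.2.1 i).2 (le_trans h (mF_le q i))
  have : ∏ i, (q : (Fin (n + 1) → ℝ) × ℝ).1 i = 1 := by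
    rw [Finset.prod_eq_one fun i _ => hall i]
  rw [q.2.2.1] at this
  exact absurd (this ▸ q.2.2.2.2) (lt_irrefl 1)

lemma mF_exists (q : SigmaTot n) : ∃ j, (q : (Fin (n + 1) → ℝ) × ℝ).1 j = mF n q := by
  obtain ⟨j, -, hj⟩ := Finset.exists_mem_eq_inf' (Finset.univ_nonempty)
    (fun i => (q : (Fin (n + 1) → ℝ) × ℝ).1 i)
  exact ⟨j, hj.symm⟩

/-- inverse map -/
def psi (n : ℕ) (q : SigmaTot n) : Sigma0 n × Set.Ico (0 : ℝ) 1 :=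
  (⟨fun i => ((q : (Fin (n + 1) → ℝ) × ℝ).1 i - mF n q) / (1 - mF n q), by
    have hm1 : (0 : ℝ) < 1 - mF n q := by linarith [mF_lt_one q]
    constructor
    · intro i
      constructor
      · exact div_nonneg (by linarith [mF_le q i]) (le_of_lt hm1)
      · rw [div_le_one hm1]
        linarith [(q.2.1 i).2]
    · obtain ⟨j, hj⟩ := mF_exists q
      apply Finset.prod_eq_zero (mem_univ j)
      rw [hj, sub_self, zero_div]⟩,
   ⟨(q : (Fin (n + 1) → ℝ) × ℝ).2, ⟨q.2.2.2.1, q.2.2.2.2⟩⟩)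

lemma left_inv (p : Sigma0 n × Set.Ico (0 : ℝ) 1) : psi n (phi n p) = p := by
  have hs := sF_mem p
  set s := sF n p with hsdef
  have hm : mF n (phi n p) = s := by
    apply le_antisymm
    · obtain ⟨j, -, hj⟩ := Finset.prod_eq_zero_iff.mp p.1.2.2
      have : (phi n p : (Fin (n + 1) → ℝ) × ℝ).1 j = s := by
        show (1 - s) * (p.1 : Fin (n + 1) → ℝ) j + s = s
        rw [hj]; ring
      exact this ▸ mF_le (phi n p) j
    · apply Finset.le_inf'
      intro i _
      show s ≤ (1 - s) * (p.1 : Fin (n + 1) → ℝ) i + s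
      nlinarith [(p.1.2.1 i).1, hs.2]
  have hne : (1 : ℝ) - s ≠ 0 := by linarith [hs.2]
  ext
  · show ((phi n p : (Fin (n + 1) → ℝ) × ℝ).1 _ - mF n (phi n p)) / (1 - mF n (phi n p))
      = (p.1 : Fin (n + 1) → ℝ) _
    rw [hm]
    show ((1 - s) * (p.1 : Fin (n + 1) → ℝ) _ + s - s) / (1 - s) = _
    field_simp
    ring
  · rfl

lemma right_inv (q : SigmaTot n) : phi n (psi n q) = q := by
  set m := mF n q with hmdef
  have hm1 : (0 : ℝ) < 1 - m := by linarith [mF_lt_one q]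
  have hx : ∀ i, (1 - m) * ((psi n q).1 : Fin (n + 1) → ℝ) i + m
      = (q : (Fin (n + 1) → ℝ) × ℝ).1 i := by
    intro i
    show (1 - m) * (((q : (Fin (n + 1) → ℝ) × ℝ).1 i - m) / (1 - m)) + m = _
    field_simp
    ring
  have hgm : g n ((psi n q).1 : Fin (n + 1) → ℝ) m = ((psi n q).2 : ℝ) := by
    show (∏ i, ((1 - m) * ((psi n q).1 : Fin (n + 1) → ℝ) i + m)) = _
    rw [Finset.prod_congr rfl fun i _ => hx i]
    exact q.2.2.1
  have hseq : sF n (psi n q) = m := by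
    apply s_unique (psi n q).1.2.1 (psi n q).1.2.2
      ⟨(sF_mem (psi n q)).1, le_of_lt (sF_mem (psi n q)).2⟩
      ⟨mF_nonneg q, le_of_lt (mF_lt_one q)⟩
    rw [g_sF (psi n q), hgm]
  apply Subtype.ext
  apply Prod.ext
  · funext i
    show (1 - sF n (psi n q)) * ((psi n q).1 : Fin (n + 1) → ℝ) i + sF n (psi n q) = _
    rw [hseq]
    exact hx i
  · rfl

lemma phi_cont : Continuous (phi n) := by
  apply Continuous.subtype_mk
  apply Continuous.prodMk
  · apply continuous_pi
    intro i
    exact (((continuous_const.sub sF_cont).mul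
      ((continuous_apply i).comp (continuous_subtype_val.comp continuous_fst))).add sF_cont)
  · exact continuous_subtype_val.comp continuous_snd

lemma mF_cont : Continuous (mF n) := by
  apply Continuous.finset_inf'_apply
  intro i _
  exact (continuous_apply i).comp (continuous_fst.comp continuous_subtype_val)

lemma psi_cont : Continuous (psi n) := by
  apply Continuous.prodMk
  · apply Continuous.subtype_mk
    apply continuous_pi
    intro i
    apply Continuous.div
    · exact ((continuous_apply i).comp (continuous_fst.comp continuous_subtype_val)).sub mF_cont
    · exact continuous_const.sub mF_cont
    · intro q
      have := mF_lt_one q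
      intro h
      rw [sub_eq_zero] at h
      exact absurd h.symm (ne_of_lt this)
  · apply Continuous.subtype_mk
    exact continuous_snd.comp continuous_subtype_val

end Stmt11

end Stmt11Aux

/-- there is a homeomorphism `f : Σⁿ₀ × [0,1) ≃ₜ {(x,ρ) : x ∈ Σⁿ_ρ, ρ ∈ [0,1)}`
compatible with the projection to `ρ`, sending `(y, ρ)` to the unique intersection point
of `Σⁿ_ρ` with the segment joining `y` to `(1,…,1)`, paired with `ρ`. -/
theorem stmt11 (n : ℕ) :
    ∃ f : (Sigma0 n × Set.Ico (0 : ℝ) 1) ≃ₜ SigmaTot n,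
      ∀ (y : Sigma0 n) (ρ : Set.Ico (0 : ℝ) 1),
        ((f (y, ρ) : (Fin (n + 1) → ℝ) × ℝ)).2 = (ρ : ℝ) ∧
        ∃ s ∈ Set.Icc (0 : ℝ) 1,
          ∀ i, ((f (y, ρ) : (Fin (n + 1) → ℝ) × ℝ)).1 i =
            (1 - s) * (y : Fin (n + 1) → ℝ) i + s := by
  refine ⟨{ toFun := Stmt11.phi n, invFun := Stmt11.psi n,
            left_inv := Stmt11.left_inv, right_inv := Stmt11.right_inv,
            continuous_toFun := Stmt11.phi_cont,
            continuous_invFun := Stmt11.psi_cont }, ?_⟩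
  intro y ρ
  refine ⟨rfl, Stmt11.sF n (y, ρ), ⟨(Stmt11.sF_mem (y, ρ)).1,
    le_of_lt (Stmt11.sF_mem (y, ρ)).2⟩, fun i => rfl⟩
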